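/- arXiv:1205.0174 — 5 statements merged into one kernel-verified Lean document; each statement's English description precedes it below -/
import Mathlib

section
/- Let H be an infinite hyperreal and let x, y be finite (not infinite) hyperreals satisfying the equation (y + 2 + 2/H)^2 = (x^2 + y^2)·(1 + 4/H + 4/H^2). Then the shadows x₀ = st(x) and y₀ = st(y) satisfy y₀ = x₀^2/4 − 1; that is, the finite portion of Leibniz's status transitus ellipse with one focus at the infinite point (0,H) is infinitely close to the real parabola y = x²/4 − 1. -/
open Hyperreal in
/-- Leibniz's status transitus ellipse with one focus at the infinite point `(0, H)`:
if `H` is an infinite hyperreal and `x`, `y` are finite hyperreals satisfying the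
polynomial ellipse equation `(y + 2 + 2/H)^2 = (x^2 + y^2) * (1 + 4/H + 4/H^2)`,
then the shadows satisfy `st y = (st x)^2 / 4 - 1`, i.e. the finite portion of the
status transitus is infinitely close to the real parabola `y = x^2/4 - 1`. -/
theorem status_transitus_shadow_parabola (H x y : ℝ*)
    (hH : Hyperreal.Infinite H) (hx : ¬ Hyperreal.Infinite x) (hy : ¬ Hyperreal.Infinite y)
    (heq : (y + 2 + 2 / H) ^ 2 = (x ^ 2 + y ^ 2) * (1 + 4 / H + 4 / H ^ 2)) :
    Hyperreal.st y = (Hyperreal.st x) ^ 2 / 4 - 1 := by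
  have hx' := isSt_st' hx
  have hy' := isSt_st' hy
  have hinv : IsSt H⁻¹ 0 := infinitesimal_inv_of_infinite hH
  have h2 : IsSt (2 / H) 0 := by
    simpa [div_eq_mul_inv] using (isSt_refl_real 2).mul hinv
  have h4 : IsSt (4 / H) 0 := by
    simpa [div_eq_mul_inv] using (isSt_refl_real 4).mul hinv
  have h42 : IsSt (4 / H ^ 2) 0 := by
    have := ((isSt_refl_real 4).mul hinv).mul hinv
    simpa [div_eq_mul_inv, sq, mul_inv, mul_assoc] using this
  have hL : IsSt ((y + 2 + 2 / H) ^ 2) ((st y + 2 + 0) ^ 2) := by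
    have h := (hy'.add (isSt_refl_real 2)).add h2
    simpa [sq] using h.mul h
  have hR : IsSt ((x ^ 2 + y ^ 2) * (1 + 4 / H + 4 / H ^ 2))
      ((st x ^ 2 + st y ^ 2) * (1 + 0 + 0)) := by
    have ha : IsSt (x ^ 2 + y ^ 2) (st x ^ 2 + st y ^ 2) := by
      have := (hx'.mul hx').add (hy'.mul hy')
      simpa [sq] using this
    exact ha.mul (((isSt_refl_real 1).add h4).add h42)
  have key := (heq ▸ hL).unique hR
  nlinarith [key]
end

section
/- For all hyperreals x, y, H with H ≠ 0, the equation 4·(x² + y²)·(x² + (H − y)²) = ((H + 2)² − (x² + y²) − (x² + (H − y)²))² holds if and only if (y + 2 + 2/H)² = (x² + y²)·(1 + 4/H + 4/H²). (Thus the status transitus for infinite H satisfies the final polynomial form of the ellipse equation exactly when it satisfies the twice-squared focal-sum form.) -/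
/-- For all hyperreals `x`, `y`, `H` with `H ≠ 0`, the twice-squared focal-sum form of
the ellipse equation holds if and only if the final polynomial form does; in particular
the status transitus for infinite `H` satisfies the one exactly when it satisfies the
other. -/
theorem status_transitus_equation_equiv (x y H : ℝ*) (hH : H ≠ 0) :
    4 * (x ^ 2 + y ^ 2) * (x ^ 2 + (H - y) ^ 2)
      = ((H + 2) ^ 2 - (x ^ 2 + y ^ 2) - (x ^ 2 + (H - y) ^ 2)) ^ 2
    ↔ (y + 2 + 2 / H) ^ 2 = (x ^ 2 + y ^ 2) * (1 + 4 / H + 4 / H ^ 2) := by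
  have h2 : (H : ℝ*) ^ 2 ≠ 0 := pow_ne_zero _ hH
  rw [show (y + 2 + 2 / H) ^ 2 = (H * y + 2 * H + 2) ^ 2 / H ^ 2 by field_simp,
      show (x ^ 2 + y ^ 2) * (1 + 4 / H + 4 / H ^ 2)
          = (x ^ 2 + y ^ 2) * (H + 2) ^ 2 / H ^ 2 by field_simp; ring,
      div_eq_div_iff h2 h2]
  constructor <;> intro h
  · linear_combination (-(H ^ 2) / 4) * h
  · apply mul_left_cancel₀ h2
    linear_combination (-4 : ℝ*) * h
end

section
/- (The derivative as the standard part of the differential quotient, formula f'(x) = st(Δy/Δx).) Let f : ℝ → ℝ, let x, L be real numbers with `HasDerivAt f L x`, and let ε be a nonzero infinitesimal hyperreal. Then the hyperreal (f*(x + ε) − f(x))/ε is finite and its standard part equals L, where f* denotes the natural extension of f to the hyperreals. -/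
/-- The natural extension `f* : ℝ* → ℝ*` of `f : ℝ → ℝ`, acting componentwise on
representing sequences. -/
noncomputable def Hyperreal.extend (f : ℝ → ℝ) : ℝ* → ℝ* := Filter.Germ.map f

/-- The derivative as the standard part of the differential quotient,
`f'(x) = st (Δy/Δx)`: if `HasDerivAt f L x` and `ε` is a nonzero infinitesimal, then
`(f*(x + ε) − f(x))/ε` is finite with standard part `L`. -/
theorem deriv_eq_st_differential_quotient (f : ℝ → ℝ) (x L : ℝ)
    (hf : HasDerivAt f L x) (ε : ℝ*) (hε : ε ≠ 0) (hinf : Hyperreal.Infinitesimal ε) :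
    ¬ Hyperreal.Infinite ((Hyperreal.extend f ((x : ℝ*) + ε) - (f x : ℝ*)) / ε) ∧
      Hyperreal.st ((Hyperreal.extend f ((x : ℝ*) + ε) - (f x : ℝ*)) / ε) = L := by
  obtain ⟨s, rfl⟩ := Hyperreal.ofSeq_surjective ε
  -- the slope function tends to L at 0 within the punctured neighborhood
  have hslope : Filter.Tendsto (fun t : ℝ => (f (x + t) - f x) / t)
      (nhdsWithin 0 {(0:ℝ)}ᶜ) (nhds L) := by
    have h := hf.tendsto_slope_zero
    refine h.congr fun t => ?_
    simp [smul_eq_mul, div_eq_inv_mul]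
  -- s n ≠ 0 eventually along the hyperfilter
  have hne : ∀ᶠ n in Filter.hyperfilter ℕ, s n ≠ 0 := by
    rw [Ultrafilter.eventually_not]
    intro h
    exact hε (Filter.Germ.coe_eq.2 h)
  -- s tends to 0 within the punctured neighborhood, along the hyperfilter
  have hs0 : Filter.Tendsto s (Filter.hyperfilter ℕ : Filter ℕ)
      (nhdsWithin 0 {(0:ℝ)}ᶜ) := by
    rw [tendsto_nhdsWithin_iff]
    exact ⟨Hyperreal.isSt_ofSeq_iff_tendsto.1 hinf, hne⟩
  have hq : Hyperreal.IsSt (Hyperreal.ofSeq fun n => (f (x + s n) - f x) / s n) L :=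
    Hyperreal.isSt_ofSeq_iff_tendsto.2 (hslope.comp hs0)
  have heq : (Hyperreal.extend f ((x : ℝ*) + Hyperreal.ofSeq s) - (f x : ℝ*)) /
      Hyperreal.ofSeq s = Hyperreal.ofSeq fun n => (f (x + s n) - f x) / s n := rfl
  rw [heq]
  exact ⟨hq.not_infinite, hq.st_eq⟩
end

section
/- (Any ordered field properly containing the reals contains nonzero infinitesimals.) Let K be a linearly ordered field and φ : ℝ →+* K a ring homomorphism that is not surjective. Then there exists ε ∈ K with ε ≠ 0 and |ε| < φ(δ) for every real δ > 0. -/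
/-- Any linearly ordered field properly containing the reals contains nonzero
infinitesimals: if `φ : ℝ →+* K` is a ring homomorphism into a linearly ordered field
that is not surjective, then there exists `ε ∈ K` with `ε ≠ 0` and `|ε| < φ δ` for
every real `δ > 0`. -/
theorem exists_nonzero_infinitesimal_of_not_surjective {K : Type*}
    [Field K] [LinearOrder K] [IsStrictOrderedRing K] (φ : ℝ →+* K) (hφ : ¬ Function.Surjective φ) :
    ∃ ε : K, ε ≠ 0 ∧ ∀ δ : ℝ, 0 < δ → |ε| < φ δ := by
  have hmono : Monotone φ := ringHom_monotone (fun r hr => ⟨Real.sqrt r, (Real.mul_self_sqrt hr).symm⟩) φ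
  have hsm : StrictMono φ := hmono.strictMono_of_injective φ.injective
  rw [Function.Surjective] at hφ
  push_neg at hφ
  obtain ⟨x, hx⟩ := hφ
  -- a helper: if y > φ r for all r, then 1/y is a positive infinitesimal
  have key : ∀ y : K, (∀ r : ℝ, φ r < y) → ∃ ε : K, ε ≠ 0 ∧ ∀ δ : ℝ, 0 < δ → |ε| < φ δ := by
    intro y hy
    have hy0 : 0 < y := by simpa using hy 0
    refine ⟨y⁻¹, by positivity, fun δ hδ => ?_⟩
    rw [abs_of_pos (by positivity)]
    have h1 : φ δ⁻¹ < y := hy _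
    have h2 : (0:K) < φ δ⁻¹ := by simpa using hsm (show (0:ℝ) < δ⁻¹ by positivity)
    have := inv_strictAnti₀ h2 h1
    rwa [← map_inv₀, inv_inv] at this
  set S : Set ℝ := {r | φ r ≤ x} with hS
  by_cases hne : S.Nonempty
  · by_cases hbdd : BddAbove S
    · set s := sSup S with hs
      refine ⟨x - φ s, fun h => hx s (by linarith [sub_eq_zero.mp h]), fun δ hδ => ?_⟩
      have hupper : x < φ (s + δ) := by
        by_contra h
        push_neg at h
        have : s + δ ∈ S := h
        have := le_csSup hbdd this
        linarith
      have hlower : φ (s - δ) < x := by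
        obtain ⟨r, hrS, hr⟩ := exists_lt_of_lt_csSup hne (show s - δ < s by linarith)
        exact lt_of_lt_of_le (hsm hr) hrS
      rw [abs_lt]
      constructor
      · have := hlower
        rw [map_sub] at this
        linarith
      · have := hupper
        rw [map_add] at this
        linarith
    · -- S nonempty unbounded above: x ≥ φ r for all r, so x is infinite
      apply key x
      intro r
      rw [not_bddAbove_iff] at hbdd
      obtain ⟨r', hr'S, hrr'⟩ := hbdd (r + 1)
      calc φ r < φ r' := hsm (by linarith)
        _ ≤ x := hr'S
  · -- S empty: x < φ r for all r, so -x is infinite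
    have h : ∀ r : ℝ, φ r < (-x) := by
      intro r
      have : ¬ φ (-r) ≤ x := fun hc => hne ⟨-r, hc⟩
      push_neg at this
      rw [map_neg] at this
      linarith
    obtain ⟨ε, h1, h2⟩ := key (-x) h
    exact ⟨ε, h1, h2⟩
end

section
/- (The quotient of the sequence ring by a maximal ideal containing the eventually-zero sequences is a proper field extension of ℝ.) Let M be a maximal ideal of the ring ℕ → ℝ (with pointwise operations) that contains every sequence vanishing at all but finitely many indices. Then the ring homomorphism ℝ → (ℕ → ℝ)/M sending a real c to the residue class of the constant sequence c is injective, and the residue class of the sequence n ↦ 1/(n+1) is nonzero and does not lie in the range of this homomorphism. -/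
/-- A sequence that is everywhere nonzero is a unit, so cannot lie in a proper ideal. -/
lemma notMem_of_ne_zero (M : Ideal (ℕ → ℝ)) (hM : M.IsMaximal)
    (f : ℕ → ℝ) (hf : ∀ n, f n ≠ 0) : f ∉ M := by
  intro hfM
  have hu : IsUnit f := by
    refine ⟨⟨f, fun n => (f n)⁻¹, ?_, ?_⟩, rfl⟩ <;>
      exact funext fun n => by simp [mul_inv_cancel₀ (hf n), inv_mul_cancel₀ (hf n)]
  exact hM.ne_top (M.eq_top_of_isUnit_mem hfM hu)

/-- The quotient of the sequence ring `ℕ → ℝ` by a maximal ideal `M` containing the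
eventually-zero sequences is a proper field extension of `ℝ`: the ring homomorphism
sending a real `c` to the residue class of the constant sequence `c` is injective, and
the residue class of the sequence `n ↦ 1/(n+1)` is nonzero and not in its range. -/
theorem quotient_by_maximal_ideal_proper_extension (M : Ideal (ℕ → ℝ))
    (hM : M.IsMaximal) (hez : ∀ s : ℕ → ℝ, ({n | s n ≠ 0} : Set ℕ).Finite → s ∈ M) :
    Function.Injective ((Ideal.Quotient.mk M).comp (Pi.constRingHom ℕ ℝ)) ∧
      Ideal.Quotient.mk M (fun n : ℕ => 1 / ((n : ℝ) + 1)) ≠ 0 ∧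
      Ideal.Quotient.mk M (fun n : ℕ => 1 / ((n : ℝ) + 1)) ∉
        Set.range ((Ideal.Quotient.mk M).comp (Pi.constRingHom ℕ ℝ)) := by
  set e : ℕ → ℝ := fun n : ℕ => 1 / ((n : ℝ) + 1) with he
  have hepos : ∀ n, e n ≠ 0 := fun n => by
    have : (0:ℝ) < (n : ℝ) + 1 := by positivity
    simp [he, this.ne']
  haveI : Nontrivial ((ℕ → ℝ) ⧸ M) := Ideal.Quotient.nontrivial_iff.mpr hM.ne_top
  refine ⟨RingHom.injective _, ?_, ?_⟩
  · intro h
    rw [Ideal.Quotient.eq_zero_iff_mem] at h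
    exact notMem_of_ne_zero M hM e hepos h
  · rintro ⟨c, hc⟩
    simp only [RingHom.comp_apply] at hc
    rw [Ideal.Quotient.mk_eq_mk_iff_sub_mem] at hc
    set s : ℕ → ℝ := Pi.constRingHom ℕ ℝ c - e with hs
    -- the zero set of s is finite (at most one element)
    have hzfin : ({n | s n = 0} : Set ℕ).Finite := by
      apply Set.Subsingleton.finite
      intro m hm n hn
      have hm' : c - e m = 0 := hm
      have hn' : c - e n = 0 := hn
      have : e m = e n := by
        rw [← sub_eq_zero.mp hm', ← sub_eq_zero.mp hn']
      have hmn : ((m:ℝ) + 1)⁻¹ = ((n:ℝ) + 1)⁻¹ := by simpa [he, one_div] using this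
      have : (m:ℝ) + 1 = (n:ℝ) + 1 :=
        inv_injective hmn
      exact_mod_cast add_right_cancel this
    -- the indicator of the zero set
    set u : ℕ → ℝ := fun n => if s n = 0 then 1 else 0 with hu
    have huM : u ∈ M := by
      apply hez
      apply hzfin.subset
      intro n hn
      by_contra h
      simp [hu, h] at hn
    have hsum : s + u ∈ M := M.add_mem hc huM
    have : ∀ n, (s + u) n ≠ 0 := by
      intro n
      by_cases h : s n = 0 <;> simp [hu, h]
    exact notMem_of_ne_zero M hM _ this hsum
end
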